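/- For C_{m,1} (m ≥ 2) and ℓ ≥ 2, the magnitude homology MH_{k,ℓ}(a₀,a_m) (tuples from the initial vertex a₀ to the terminal vertex a_m) vanishes except for MH_{2,m}(a₀,a_m), which is a free R-module of rank 1 generated by the class of (a₀, a₁, a_m). -/

import Mathlib

open scoped Classical

/-- A directed graph on a vertex type `V` (loops allowed, no parallel edges). -/
structure DGraph (V : Type) where
  Adj : V → V → Prop

namespace DGraph
variable {V : Type}

/-- There is a directed path of length `n` (i.e. with `n` edges) from `x` to `y`. -/
def PathLen (G : DGraph V) (x y : V) (n : ℕ) : Prop :=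
  ∃ f : ℕ → V, f 0 = x ∧ f n = y ∧ ∀ i < n, G.Adj (f i) (f (i + 1))

/-- The shortest path metric, with values in `ℕ∞ = ℕ ∪ {∞}`. -/
noncomputable def edist (G : DGraph V) (x y : V) : ℕ∞ :=
  sInf {n : ℕ∞ | ∃ m : ℕ, n = m ∧ G.PathLen x y m}

/-- The length of a tuple of vertices: the sum of consecutive distances. -/
noncomputable def tlen (G : DGraph V) {k : ℕ} (f : Fin (k + 1) → V) : ℕ∞ :=
  ∑ i : Fin k, G.edist (f i.castSucc) (f i.succ)

/-- `y` is reachable from `x` by a directed path. -/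
def Reaches (G : DGraph V) (x y : V) : Prop := Relation.ReflTransGen G.Adj x y

/-- The induced subgraph on a set of vertices. -/
def induce (G : DGraph V) (A : Set V) : DGraph A := ⟨fun a b => G.Adj a.1 b.1⟩

end DGraph

variable {V : Type}

/-- Validity of a tuple as a magnitude-chain basis element of degree `k` and length `ℓ`:
consecutive entries are distinct, at finite distance, and the total length is `ℓ`. -/
def MCValid (G : DGraph V) (k ℓ : ℕ) (f : Fin (k + 1) → V) : Prop :=
  (∀ i : Fin k, G.edist (f i.castSucc) (f i.succ) ≠ 0 ∧ G.edist (f i.castSucc) (f i.succ) ≠ ⊤) ∧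
    G.tlen f = (ℓ : ℕ∞)

/-- Basis of the magnitude chain group `MC_{k,ℓ}(G)`. -/
def MCb (G : DGraph V) (k ℓ : ℕ) : Type := {f : Fin (k + 1) → V // MCValid G k ℓ f}

/-- The magnitude chain group `MC_{k,ℓ}(G)` with coefficients in `R`. -/
abbrev MCMod (R : Type) [CommRing R] (G : DGraph V) (k ℓ : ℕ) := MCb G k ℓ →₀ R

/-- Deletion of the interior entry in position `j+1` of a `(k+2)`-tuple. -/
def delMid {k : ℕ} (f : Fin (k + 2) → V) (j : Fin k) : Fin (k + 1) → V :=
  f ∘ (Fin.succAbove j.succ.castSucc)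

/-- The magnitude-chain differential `MC_{k+1,ℓ}(G) → MC_{k,ℓ}(G)`: delete interior
entries with alternating signs, omitting any length-decreasing term. -/
noncomputable def dMC (R : Type) [CommRing R] (G : DGraph V) (k ℓ : ℕ) :
    MCMod R G (k + 1) ℓ →ₗ[R] MCMod R G k ℓ :=
  Finsupp.lsum R fun b => LinearMap.toSpanSingleton R _
    (∑ j : Fin k, (-1 : R) ^ ((j : ℕ) + 1) •
      (if h : MCValid G k ℓ (delMid b.1 j) then
        Finsupp.single (⟨delMid b.1 j, h⟩ : MCb G k ℓ) (1 : R) else 0))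

/-- The outgoing magnitude differential from degree `k` (zero in degree `0`). -/
noncomputable def dMCOut (R : Type) [CommRing R] (G : DGraph V) (ℓ : ℕ) :
    (k : ℕ) → MCMod R G k ℓ →ₗ[R] MCMod R G (k - 1) ℓ
  | 0 => 0
  | (k + 1) => dMC R G k ℓ

/-- Magnitude homology `MH_{k,ℓ}(G)` with coefficients in `R`. -/
noncomputable abbrev MH (R : Type) [CommRing R] (G : DGraph V) (k ℓ : ℕ) :=
  letI : HasQuotient (LinearMap.ker (dMCOut R G ℓ k))
      (Submodule R (LinearMap.ker (dMCOut R G ℓ k))) :=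
      Submodule.hasQuotient (R := R) (M := LinearMap.ker (dMCOut R G ℓ k))
  LinearMap.ker (dMCOut R G ℓ k) ⧸
    (LinearMap.range (dMCOut R G ℓ (k + 1))).comap (LinearMap.ker (dMCOut R G ℓ k)).subtype

/-- Embedding of the magnitude chains into the free module on all tuples of vertices. -/
noncomputable def eMC (R : Type) [CommRing R] (G : DGraph V) (k ℓ : ℕ) :
    MCMod R G k ℓ →ₗ[R] ((Fin (k + 1) → V) →₀ R) :=
  Finsupp.lmapDomain R R Subtype.val

/-- Basis of a subcomplex of the magnitude chains, cut out by a predicate `P` on tuples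
(assumed closed under the interior deletions appearing in the differential). -/
def RCb (G : DGraph V) (P : ∀ k, (Fin (k + 1) → V) → Prop) (k ℓ : ℕ) : Type :=
  {f : Fin (k + 1) → V // MCValid G k ℓ f ∧ P k f}

/-- The degree-`k`, length-`ℓ` chain group of the subcomplex cut out by `P`. -/
abbrev RMod (R : Type) [CommRing R] (G : DGraph V) (P : ∀ k, (Fin (k + 1) → V) → Prop)
    (k ℓ : ℕ) := RCb G P k ℓ →₀ R

/-- The differential of the subcomplex cut out by `P`. -/
noncomputable def dR (R : Type) [CommRing R] (G : DGraph V)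
    (P : ∀ k, (Fin (k + 1) → V) → Prop) (k ℓ : ℕ) :
    RMod R G P (k + 1) ℓ →ₗ[R] RMod R G P k ℓ :=
  Finsupp.lsum R fun b => LinearMap.toSpanSingleton R _
    (∑ j : Fin k, (-1 : R) ^ ((j : ℕ) + 1) •
      (if h : MCValid G k ℓ (delMid b.1 j) ∧ P k (delMid b.1 j) then
        Finsupp.single (⟨delMid b.1 j, h⟩ : RCb G P k ℓ) (1 : R) else 0))

/-- The outgoing differential of the subcomplex from degree `k` (zero in degree `0`). -/
noncomputable def dROut (R : Type) [CommRing R] (G : DGraph V)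
    (P : ∀ k, (Fin (k + 1) → V) → Prop) (ℓ : ℕ) :
    (k : ℕ) → RMod R G P k ℓ →ₗ[R] RMod R G P (k - 1) ℓ
  | 0 => 0
  | (k + 1) => dR R G P k ℓ

/-- The degree-`k`, length-`ℓ` homology of the subcomplex cut out by `P`. -/
noncomputable abbrev RH (R : Type) [CommRing R] (G : DGraph V)
    (P : ∀ k, (Fin (k + 1) → V) → Prop) (k ℓ : ℕ) :=
  letI : HasQuotient (LinearMap.ker (dROut R G P ℓ k))
      (Submodule R (LinearMap.ker (dROut R G P ℓ k))) :=
      Submodule.hasQuotient (R := R) (M := LinearMap.ker (dROut R G P ℓ k))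
  LinearMap.ker (dROut R G P ℓ k) ⧸
    (LinearMap.range (dROut R G P ℓ (k + 1))).comap (LinearMap.ker (dROut R G P ℓ k)).subtype

/-- Embedding of the subcomplex chains into the free module on all tuples of vertices. -/
noncomputable def eR (R : Type) [CommRing R] (G : DGraph V)
    (P : ∀ k, (Fin (k + 1) → V) → Prop) (k ℓ : ℕ) :
    RMod R G P k ℓ →ₗ[R] ((Fin (k + 1) → V) →₀ R) :=
  Finsupp.lmapDomain R R Subtype.val

/-- `A ⊆ V`, with projection `π`, is a cofibration in `G`: an induced subgraph inclusion
with no edges from outside `A` into `A`, such that every vertex `x` in the reach of `A`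
has a projection `π x ∈ A` with `d(a,x) = d(a,π x) + d(π x,x)` for all `a ∈ A`. -/
def IsCofib (G : DGraph V) (A : Set V) (π : V → V) : Prop :=
  (∀ u v : V, u ∉ A → v ∈ A → ¬ G.Adj u v) ∧
  (∀ x : V, (∃ a ∈ A, G.Reaches a x) →
    π x ∈ A ∧ ∀ a ∈ A, G.edist a x = G.edist a (π x) + G.edist (π x) x)

/-- The predicate cutting out the subcomplex `A_{*,ℓ}(a,x)` of `MC_{*,ℓ}(X)`: tuples
starting at `a`, ending at `x`, with all intermediate entries in `A`. -/
def AP (A : Set V) (a x : V) : ∀ k, (Fin (k + 1) → V) → Prop :=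
  fun k f => f 0 = a ∧ f (Fin.last k) = x ∧
    ∀ i : Fin (k + 1), i ≠ 0 → i ≠ Fin.last k → f i ∈ A

/-- The bi-directed cycle `C_{m,1}`: vertices `a₀, ..., a_m` with edges
`a_{i-1} → a_i` for `1 ≤ i ≤ m` and the extra edge `a₀ → a_m`. -/
def Cm1 (m : ℕ) : DGraph (Fin (m + 1)) :=
  ⟨fun u v => (v : ℕ) = (u : ℕ) + 1 ∨ ((u : ℕ) = 0 ∧ (v : ℕ) = m)⟩

/-- The predicate cutting out the subcomplex `MC_{*,ℓ}(a,b)` of tuples starting at `a`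
and ending at `b`. -/
def EP {V : Type} (a b : V) : ∀ k, (Fin (k + 1) → V) → Prop :=
  fun k f => f 0 = a ∧ f (Fin.last k) = b

-- Path length characterization and edist for Cm1
section CycleLemmas
variable {m : ℕ}

lemma cm1_pathLen_iff (hm : 1 ≤ m) (x y : Fin (m+1)) (n : ℕ) :
    (Cm1 m).PathLen x y n ↔ ((y : ℕ) = x + n) ∨ ((x : ℕ) = 0 ∧ (y : ℕ) = m ∧ n = 1) := by
  constructor
  · intro h
    induction n generalizing x with
    | zero =>
      obtain ⟨f, h0, hn, _⟩ := h
      left; rw [← hn, h0]; omega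
    | succ n ih =>
      obtain ⟨f, h0, hn, hadj⟩ := h
      have h1 : (Cm1 m).Adj x (f 1) := h0 ▸ hadj 0 (Nat.succ_pos n)
      have hrest : (Cm1 m).PathLen (f 1) y n :=
        ⟨fun i => f (i+1), rfl, hn, fun i hi => hadj (i+1) (by omega)⟩
      rcases ih (f 1) hrest with hy | ⟨hf1, hy, hn1⟩
      · rcases h1 with h1 | ⟨hx0, hf1⟩
        · left; omega
        · -- x = 0, f 1 = m, y = f1 + n, but y ≤ m so n = 0
          have : (y : ℕ) ≤ m := Nat.lt_succ_iff.mp y.isLt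
          right; exact ⟨hx0, by omega, by omega⟩
      · rcases h1 with h1 | ⟨hx0, hf1⟩
        · omega
        · omega
  · rintro (hy | ⟨hx0, hy, rfl⟩)
    · have hxy : (x : ℕ) + n ≤ m := by have := y.isLt; omega
      refine ⟨fun i => ⟨min (x + i) m, by omega⟩, ?_, ?_, ?_⟩
      · exact Fin.ext (by simp [Nat.min_eq_left (by omega : (x:ℕ) ≤ m)])
      · exact Fin.ext (by simp [hy, Nat.min_eq_left hxy])
      · intro i hi
        left
        simp only
        omega
    · refine ⟨fun i => if i = 0 then x else y, by simp, by simp, ?_⟩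
      intro i hi
      interval_cases i
      simp [Cm1, hx0, hy]
      exact Or.inr (Fin.ext (by simp [hx0]))

lemma cm1_edist_self (x : Fin (m+1)) : (Cm1 m).edist x x = 0 := by
  refine le_antisymm ?_ zero_le
  exact sInf_le ⟨0, by norm_num, ⟨fun _ => x, rfl, rfl, fun i hi => by omega⟩⟩

lemma cm1_edist_top (hm : 1 ≤ m) {x y : Fin (m+1)} (h : y < x) : (Cm1 m).edist x y = ⊤ := by
  rw [DGraph.edist, sInf_eq_top]
  rintro a ⟨n, rfl, hp⟩
  rcases (cm1_pathLen_iff hm x y n).mp hp with h' | ⟨h0, _, _⟩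
  · exact absurd h' (by have := Fin.lt_def.mp h; omega)
  · exact absurd h0 (by have := Fin.lt_def.mp h; omega)

lemma cm1_edist_of_lt (hm : 1 ≤ m) {x y : Fin (m+1)} (h : x < y)
    (hnj : ¬((x : ℕ) = 0 ∧ (y : ℕ) = m)) :
    (Cm1 m).edist x y = (((y : ℕ) - (x : ℕ) : ℕ) : ℕ∞) := by
  have hlt := Fin.lt_def.mp h
  refine le_antisymm ?_ ?_
  · exact sInf_le ⟨(y : ℕ) - x, rfl, (cm1_pathLen_iff hm x y _).mpr (Or.inl (by omega))⟩
  · refine le_sInf ?_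
    rintro a ⟨n, rfl, hp⟩
    rcases (cm1_pathLen_iff hm x y n).mp hp with h' | ⟨h0, hy, rfl⟩
    · exact_mod_cast le_of_eq (by omega)
    · exact absurd ⟨h0, hy⟩ hnj

lemma cm1_edist_jump (hm : 1 ≤ m) : (Cm1 m).edist 0 (Fin.last m) = 1 := by
  refine le_antisymm ?_ ?_
  · exact sInf_le ⟨1, rfl, (cm1_pathLen_iff hm _ _ _).mpr (Or.inr (by simp))⟩
  · refine le_sInf ?_
    rintro a ⟨n, rfl, hp⟩
    rcases (cm1_pathLen_iff hm _ _ n).mp hp with h' | ⟨_, _, rfl⟩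
    · simp only [Fin.val_zero, Fin.val_last] at h'
      have : 1 ≤ n := by omega
      exact_mod_cast this
    · exact le_refl _

end CycleLemmas
section GoodLemmas
variable {m : ℕ}

/-- A good tuple: starts at 0, ends at the last vertex, strictly increasing. -/
def Good (m k : ℕ) (f : Fin (k+1) → Fin (m+1)) : Prop :=
  f 0 = 0 ∧ f (Fin.last k) = Fin.last m ∧ StrictMono f

lemma cm1_edist_lt_of_ne {x y : Fin (m+1)} (hm : 1 ≤ m)
    (h0 : (Cm1 m).edist x y ≠ 0) (ht : (Cm1 m).edist x y ≠ ⊤) : x < y := by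
  rcases lt_trichotomy x y with h | h | h
  · exact h
  · exact absurd (h ▸ cm1_edist_self x) h0
  · exact absurd (cm1_edist_top hm h) ht

lemma good_pair (hm : 1 ≤ m) {k : ℕ} (hk : 2 ≤ k) {f : Fin (k+1) → Fin (m+1)}
    (hf : Good m k f) (i : Fin k) :
    (Cm1 m).edist (f i.castSucc) (f i.succ)
      = (((f i.succ : ℕ) - (f i.castSucc : ℕ) : ℕ) : ℕ∞) := by
  apply cm1_edist_of_lt hm (hf.2.2 (by simp [Fin.lt_def]))
  rintro ⟨h0, hlast⟩
  have h1 : (i : ℕ) = 0 := by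
    by_contra h
    have : f 0 < f i.castSucc := hf.2.2 (by simp [Fin.lt_def, Fin.pos_iff_ne_zero]; omega)
    rw [hf.1] at this
    have := Fin.lt_def.mp this
    simp [h0] at this
  have h2 : (i : ℕ) + 1 = k := by
    by_contra h
    have hlt : i.succ < Fin.last k := by
      rw [Fin.lt_def]
      simp only [Fin.val_succ, Fin.val_last]
      have := i.isLt; omega
    have : f i.succ < f (Fin.last k) := hf.2.2 hlt
    rw [hf.2.1] at this
    have := Fin.lt_def.mp this
    simp [hlast, Fin.val_last] at this
  omega

lemma tlen_telescope {k : ℕ} (f : Fin (k+1) → Fin (m+1))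
    (h : ∀ i : Fin k, (Cm1 m).edist (f i.castSucc) (f i.succ)
      = (((f i.succ : ℕ) - (f i.castSucc : ℕ) : ℕ) : ℕ∞))
    (hmono : Monotone f) :
    (Cm1 m).tlen f = (((f (Fin.last k) : ℕ) - (f 0 : ℕ) : ℕ) : ℕ∞) := by
  induction k with
  | zero => simp [DGraph.tlen]
  | succ k ih =>
    rw [DGraph.tlen, Fin.sum_univ_castSucc]
    have hrw : ∀ i : Fin k,
        (Cm1 m).edist (f i.castSucc.castSucc) (f i.castSucc.succ)
          = (Cm1 m).edist ((f ∘ Fin.castSucc) i.castSucc) ((f ∘ Fin.castSucc) i.succ) := by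
      intro i; simp [Function.comp, Fin.succ_castSucc, -Fin.castSucc_succ]
    have hsum : ∑ i : Fin k, (Cm1 m).edist (f i.castSucc.castSucc) (f i.castSucc.succ)
        = (Cm1 m).tlen (f ∘ Fin.castSucc) := by
      rw [DGraph.tlen]; exact Finset.sum_congr rfl fun i _ => hrw i
    rw [hsum, ih (f ∘ Fin.castSucc)
      (fun i => by rw [← hrw i, h i.castSucc]; simp [Function.comp, Fin.succ_castSucc, -Fin.castSucc_succ])
      (fun a b hab => hmono (show a.castSucc ≤ b.castSucc from hab)),
      h (Fin.last k)]
    have e1 : ((f ∘ Fin.castSucc) 0) = f 0 := by simp [Function.comp]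
    have e2 : ((f ∘ Fin.castSucc) (Fin.last k)) = f ((Fin.last k).castSucc) := rfl
    have e3 : f (Fin.last k).succ = f (Fin.last (k+1)) := by rw [Fin.succ_last]
    rw [e1, e2, e3, ← Nat.cast_add]
    congr 1
    have le1 : (f 0 : ℕ) ≤ (f (Fin.last k).castSucc : ℕ) :=
      Fin.le_def.mp (hmono (Fin.zero_le _))
    have le2 : (f (Fin.last k).castSucc : ℕ) ≤ (f (Fin.last (k+1)) : ℕ) :=
      Fin.le_def.mp (hmono (Fin.le_last _))
    omega

lemma good_tlen (hm : 1 ≤ m) {k : ℕ} (hk : 2 ≤ k) {f : Fin (k+1) → Fin (m+1)}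
    (hf : Good m k f) : (Cm1 m).tlen f = (m : ℕ∞) := by
  rw [tlen_telescope f (good_pair hm hk hf) hf.2.2.monotone, hf.1, hf.2.1]
  simp

lemma good_to_valid (hm : 2 ≤ m) {k : ℕ} (hk : 2 ≤ k) {f : Fin (k+1) → Fin (m+1)}
    (hf : Good m k f) :
    MCValid (Cm1 m) k m f ∧ EP (0 : Fin (m+1)) (Fin.last m) k f := by
  refine ⟨⟨fun i => ?_, good_tlen (by omega) hk hf⟩, hf.1, hf.2.1⟩
  rw [good_pair (by omega) hk hf i]
  have hlt : f i.castSucc < f i.succ := hf.2.2 (by simp [Fin.lt_def])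
  have := Fin.lt_def.mp hlt
  constructor
  · simp only [ne_eq, Nat.cast_eq_zero]; omega
  · exact ENat.coe_ne_top _

lemma valid_to_good (hm : 2 ≤ m) {k ℓ : ℕ} (hk : 2 ≤ k) {f : Fin (k+1) → Fin (m+1)}
    (hv : MCValid (Cm1 m) k ℓ f) (he : EP (0 : Fin (m+1)) (Fin.last m) k f) :
    Good m k f ∧ ℓ = m := by
  have hsm : StrictMono f := Fin.strictMono_iff_lt_succ.mpr fun i =>
    cm1_edist_lt_of_ne (by omega) (hv.1 i).1 (hv.1 i).2
  have hg : Good m k f := ⟨he.1, he.2, hsm⟩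
  refine ⟨hg, ?_⟩
  have := good_tlen (by omega : 1 ≤ m) hk hg
  rw [hv.2] at this
  exact_mod_cast this

lemma rcb_empty_k0 (hm : 2 ≤ m) (ℓ : ℕ) :
    IsEmpty (RCb (Cm1 m) (EP (0 : Fin (m+1)) (Fin.last m)) 0 ℓ) := by
  refine ⟨fun b => ?_⟩
  obtain ⟨f, _, h0, hlast⟩ := b
  have : (0 : Fin (m+1)) = Fin.last m := by rw [← h0]; exact hlast.symm ▸ rfl
  have := congrArg Fin.val this
  simp [Fin.val_last] at this
  omega

lemma rcb_empty_k1 (hm : 2 ≤ m) {ℓ : ℕ} (hℓ : 2 ≤ ℓ) :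
    IsEmpty (RCb (Cm1 m) (EP (0 : Fin (m+1)) (Fin.last m)) 1 ℓ) := by
  refine ⟨fun b => ?_⟩
  obtain ⟨f, hv, h0, hlast⟩ := b
  have ht : (Cm1 m).tlen f = (Cm1 m).edist (f 0) (f 1) := by
    rw [DGraph.tlen, Fin.sum_univ_one]
    rfl
  have h1 : f (0 : Fin 1).succ = f 1 := rfl
  rw [hv.2] at ht
  have : f 1 = Fin.last m := hlast
  rw [h0, this] at ht
  rw [cm1_edist_jump (by omega)] at ht
  have : ℓ = 1 := by exact_mod_cast ht
  omega

lemma rcb_empty_lne (hm : 2 ≤ m) {k ℓ : ℕ} (hk : 2 ≤ k) (hne : ℓ ≠ m) :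
    IsEmpty (RCb (Cm1 m) (EP (0 : Fin (m+1)) (Fin.last m)) k ℓ) := by
  refine ⟨fun b => ?_⟩
  exact hne (valid_to_good hm hk b.2.1 b.2.2).2

end GoodLemmas
section InsDel
variable {V : Type} {v : V}

/-- Insert `v` in position 1. -/
def insv (v : V) {k : ℕ} (f : Fin (k+1) → V) : Fin (k+2) → V :=
  Fin.cons (f 0) (Fin.cons v (Fin.tail f))

@[simp] lemma insv_zero {k : ℕ} (f : Fin (k+1) → V) : insv v f 0 = f 0 := rfl

@[simp] lemma insv_succ_zero {k : ℕ} (f : Fin (k+1) → V) : insv v f (Fin.succ 0) = v := by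
  rw [insv, Fin.cons_succ]
  exact Fin.cons_zero _ _

@[simp] lemma insv_one {k : ℕ} (f : Fin (k+1) → V) : insv v f 1 = v := by
  rw [show (1 : Fin (k+2)) = Fin.succ 0 from by ext; simp]
  exact insv_succ_zero f

@[simp] lemma insv_succ_succ {k : ℕ} (f : Fin (k+1) → V) (i : Fin k) :
    insv v f i.succ.succ = f i.succ := by
  rw [insv, Fin.cons_succ, Fin.cons_succ]
  rfl

lemma delMid_apply {k : ℕ} (f : Fin (k+2) → V) (j : Fin k) (i : Fin (k+1)) :
    delMid f j i = if (i : ℕ) < (j : ℕ) + 1 then f i.castSucc else f i.succ := by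
  show f (Fin.succAbove j.succ.castSucc i) = _
  rw [Fin.succAbove, apply_ite f]
  congr 1

@[simp] lemma delMid_zero' {k : ℕ} (f : Fin (k+2) → V) (j : Fin k) : delMid f j 0 = f 0 := by
  rw [delMid_apply]
  simp

lemma delMid_last {k : ℕ} (f : Fin (k+2) → V) (j : Fin k) :
    delMid f j (Fin.last k) = f (Fin.last (k+1)) := by
  rw [delMid_apply]
  rw [if_neg (by simp [Fin.is_lt]), Fin.succ_last]

lemma delMid_insv_zero {k : ℕ} (f : Fin (k+2) → V) :
    delMid (insv v f) (0 : Fin (k+1)) = f := by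
  funext i
  rw [delMid_apply]
  refine Fin.cases ?_ (fun i' => ?_) i
  · simp
  · rw [if_neg (by simp)]
    exact insv_succ_succ f i'

lemma delMid_insv_succ {k : ℕ} (f : Fin (k+2) → V) (j : Fin k) :
    delMid (insv v f) j.succ = insv v (delMid f j) := by
  funext i
  rw [delMid_apply]
  refine Fin.cases ?_ (fun i' => ?_) i
  · simp
  · refine Fin.cases ?_ (fun i'' => ?_) i'
    · rw [if_pos (by simp)]
      rw [show (Fin.succ (0 : Fin (k+1))).castSucc = Fin.succ ((0 : Fin (k+1)).castSucc) from
        (Fin.succ_castSucc _).symm, Fin.castSucc_zero]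
      rw [insv_succ_zero, insv_succ_zero]
    · rw [insv_succ_succ (delMid f j) i'', delMid_apply f j i''.succ]
      rw [show (i''.succ.succ).castSucc = i''.castSucc.succ.succ from by
        rw [Fin.succ_castSucc, Fin.succ_castSucc]]
      rw [insv_succ_succ f i''.castSucc, insv_succ_succ f i''.succ]
      by_cases hc : (i'' : ℕ) < (j : ℕ)
      · rw [if_pos (by simp [Fin.val_succ]; omega), if_pos (by simp [Fin.val_succ]; omega),
          Fin.succ_castSucc]
      · rw [if_neg (by simp [Fin.val_succ]; omega), if_neg (by simp [Fin.val_succ]; omega)]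

lemma insv_delMid_zero {k : ℕ} (f : Fin (k+3) → V) (h1 : f (Fin.succ 0) = v) :
    insv v (delMid f (0 : Fin (k+1))) = f := by
  funext i
  refine Fin.cases ?_ (fun i' => ?_) i
  · simp
  · refine Fin.cases ?_ (fun i'' => ?_) i'
    · rw [insv_succ_zero, h1]
    · rw [insv_succ_succ, delMid_apply, if_neg (by simp)]

end InsDel
section GoodPres
variable {V : Type} {m : ℕ}

lemma delMid_strictMono {k : ℕ} {f : Fin (k+2) → Fin (m+1)} (hf : StrictMono f) (j : Fin k) :
    StrictMono (delMid f j) :=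
  hf.comp (Fin.strictMono_succAbove _)

lemma good_del {k : ℕ} {f : Fin (k+3) → Fin (m+1)} (hf : Good m (k+2) f) (j : Fin (k+1)) :
    Good m (k+1) (delMid f j) := by
  refine ⟨?_, ?_, delMid_strictMono hf.2.2 j⟩
  · rw [delMid_zero', hf.1]
  · rw [delMid_last, hf.2.1]

lemma good_second_pos {k : ℕ} {f : Fin (k+2) → Fin (m+1)} (hf : Good m (k+1) f) :
    1 ≤ (f (Fin.succ 0) : ℕ) := by
  have : f 0 < f (Fin.succ 0) := hf.2.2 (by simp [Fin.lt_def])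
  rw [hf.1] at this
  exact Fin.lt_def.mp this

lemma good_ins (hm : 2 ≤ m) {k : ℕ} {f : Fin (k+2) → Fin (m+1)} (hf : Good m (k+1) f)
    (h1 : f (Fin.succ 0) ≠ 1) : Good m (k+2) (insv 1 f) := by
  have hv1 : ((1 : Fin (m+1)) : ℕ) = 1 := by
    have h := Fin.val_one' (m+1)
    rw [h]
    exact Nat.mod_eq_of_lt (by omega)
  have h2 : 2 ≤ (f (Fin.succ 0) : ℕ) := by
    have := good_second_pos hf
    rcases Nat.lt_or_ge (f (Fin.succ 0) : ℕ) 2 with h | h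
    · exact absurd (Fin.ext (by rw [hv1]; omega : (f (Fin.succ 0) : ℕ) = ((1 : Fin (m+1)) : ℕ))) h1
    · exact h
  refine ⟨by simp [hf.1], ?_, ?_⟩
  · rw [show Fin.last (k+2) = ((Fin.last k).succ).succ from by
      rw [Fin.succ_last, Fin.succ_last]]
    rw [insv_succ_succ, Fin.succ_last, hf.2.1]
  · rw [Fin.strictMono_iff_lt_succ]
    intro i
    refine Fin.cases ?_ (fun i' => ?_) i
    · rw [Fin.castSucc_zero, insv_zero, hf.1, insv_succ_zero]
      rw [Fin.lt_def, Fin.val_zero, hv1]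
      omega
    · refine Fin.cases ?_ (fun i'' => ?_) i'
      · rw [show (Fin.succ (0 : Fin (k+1))).castSucc = Fin.succ ((0:Fin (k+1)).castSucc) from
          (Fin.succ_castSucc _).symm, Fin.castSucc_zero, insv_succ_zero]
        rw [insv_succ_succ]
        rw [Fin.lt_def, hv1]
        omega
      · rw [show (i''.succ.succ).castSucc = i''.castSucc.succ.succ from by
          rw [Fin.succ_castSucc, Fin.succ_castSucc]]
        rw [insv_succ_succ, insv_succ_succ]
        rw [Fin.succ_castSucc]
        exact hf.2.2 (by simp [Fin.lt_def])

lemma delMid_succ_second {k : ℕ} (f : Fin (k+3) → V) (j : Fin k) :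
    delMid f j.succ (Fin.succ 0) = f (Fin.succ 0) := by
  rw [delMid_apply, if_pos ?_]
  swap
  · simp only [Fin.val_succ, Fin.val_zero]
    omega
  rw [show (Fin.succ (0 : Fin (k+1))).castSucc = Fin.succ ((0:Fin (k+1)).castSucc) from
    (Fin.succ_castSucc _).symm, Fin.castSucc_zero]

lemma delMid_zero_second {k : ℕ} (f : Fin (k+3) → V) :
    delMid f (0 : Fin (k+1)) (Fin.succ 0) = f (Fin.succ 0).succ := by
  rw [delMid_apply, if_neg (by simp)]

end GoodPres
section Chain
variable {m : ℕ}

lemma RCb_good (hm : 2 ≤ m) {k : ℕ}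
    (b : RCb (Cm1 m) (EP (0 : Fin (m+1)) (Fin.last m)) (k+2) m) : Good m (k+2) b.1 :=
  (valid_to_good hm (by omega) b.2.1 b.2.2).1

lemma good_ssucc_ne_one (hm : 2 ≤ m) {k : ℕ} {f : Fin (k+3) → Fin (m+1)}
    (hf : Good m (k+2) f) : f (Fin.succ (0 : Fin (k+1))).succ ≠ 1 := by
  have hv1 : ((1 : Fin (m+1)) : ℕ) = 1 := by
    have h := Fin.val_one' (m+1)
    rw [h]
    exact Nat.mod_eq_of_lt (by omega)
  have h1 : f 0 < f (Fin.succ (0 : Fin (k+2))) := hf.2.2 (by simp [Fin.lt_def])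
  have h2 : f (Fin.succ (0 : Fin (k+1))).castSucc < f (Fin.succ (0 : Fin (k+1))).succ :=
    hf.2.2 Fin.castSucc_lt_succ
  have e : (Fin.succ (0 : Fin (k+1))).castSucc = Fin.succ (0 : Fin (k+2)) := by
    rw [show (Fin.succ (0 : Fin (k+1))).castSucc = Fin.succ ((0:Fin (k+1)).castSucc) from
      (Fin.succ_castSucc _).symm, Fin.castSucc_zero]
  rw [e] at h2
  rw [hf.1] at h1
  have v1 := Fin.lt_def.mp h1
  have v2 := Fin.lt_def.mp h2
  intro hcon
  rw [hcon] at v2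
  simp [hv1] at v1 v2
  omega

/-- The basis element of the subcomplex attached to a good tuple. -/
def GRC (hm : 2 ≤ m) {k : ℕ} {f : Fin (k+3) → Fin (m+1)} (hf : Good m (k+2) f) :
    RCb (Cm1 m) (EP (0 : Fin (m+1)) (Fin.last m)) (k+2) m :=
  ⟨f, good_to_valid hm (by omega) hf⟩

/-- The contracting homotopy: (minus) insertion of the vertex `1` in position 1. -/
noncomputable def Hmap (R : Type) [CommRing R] (m : ℕ) (hm : 2 ≤ m) (n : ℕ) :
    RMod R (Cm1 m) (EP (0 : Fin (m+1)) (Fin.last m)) (n+2) m →ₗ[R]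
      RMod R (Cm1 m) (EP (0 : Fin (m+1)) (Fin.last m)) (n+3) m :=
  Finsupp.lsum R fun b => LinearMap.toSpanSingleton R _
    (if h : b.1 (Fin.succ 0) = (1 : Fin (m+1)) then 0 else
      - Finsupp.single (GRC hm (good_ins hm (RCb_good hm b) h)) (1 : R))

lemma Hmap_single (R : Type) [CommRing R] (hm : 2 ≤ m) (n : ℕ)
    (b : RCb (Cm1 m) (EP (0 : Fin (m+1)) (Fin.last m)) (n+2) m) :
    Hmap R m hm n (Finsupp.single b 1)
      = (if h : b.1 (Fin.succ 0) = (1 : Fin (m+1)) then 0 else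
          - Finsupp.single (GRC hm (good_ins hm (RCb_good hm b) h)) (1 : R)) := by
  rw [Hmap, Finsupp.lsum_single, LinearMap.toSpanSingleton_apply, one_smul]

lemma dR_single_good (R : Type) [CommRing R] (hm : 2 ≤ m) (n : ℕ)
    (b : RCb (Cm1 m) (EP (0 : Fin (m+1)) (Fin.last m)) (n+3) m) :
    dR R (Cm1 m) (EP (0 : Fin (m+1)) (Fin.last m)) (n+2) m (Finsupp.single b 1)
      = ∑ j : Fin (n+2), (-1 : R)^((j : ℕ)+1) •
          Finsupp.single (GRC hm (good_del (RCb_good hm b) j)) (1 : R) := by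
  rw [dR, Finsupp.lsum_single, LinearMap.toSpanSingleton_apply, one_smul]
  refine Finset.sum_congr rfl fun j _ => ?_
  rw [dif_pos (good_to_valid hm (by omega) (good_del (RCb_good hm b) j))]
  rfl

/-- Coefficient-sum functional. -/
noncomputable def eps (R : Type) [CommRing R] {V : Type} (G : DGraph V)
    (P : ∀ k, (Fin (k + 1) → V) → Prop) (k ℓ : ℕ) : RMod R G P k ℓ →ₗ[R] R :=
  Finsupp.lsum R fun _ => LinearMap.id

@[simp] lemma eps_single (R : Type) [CommRing R] {V : Type} (G : DGraph V)
    (P : ∀ k, (Fin (k + 1) → V) → Prop) (k ℓ : ℕ) (b : RCb G P k ℓ) (r : R) :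
    eps R G P k ℓ (Finsupp.single b r) = r := by
  rw [eps, Finsupp.lsum_single]
  rfl

end Chain
section Homotopy
variable {m : ℕ}

lemma del_second_ne_one (hm : 2 ≤ m) {k : ℕ} {f : Fin (k+4) → Fin (m+1)}
    (hf : Good m (k+3) f) (h1 : f (Fin.succ 0) ≠ 1) (j : Fin (k+2)) :
    delMid f j (Fin.succ 0) ≠ 1 := by
  refine Fin.cases ?_ (fun j' => ?_) j
  · rw [delMid_zero_second]
    exact good_ssucc_ne_one hm hf
  · rw [delMid_succ_second]
    exact h1

lemma homotopy_id (R : Type) [CommRing R] (hm : 2 ≤ m) (n : ℕ) :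
    (dR R (Cm1 m) (EP (0 : Fin (m+1)) (Fin.last m)) (n+3) m).comp (Hmap R m hm (n+1))
      + (Hmap R m hm n).comp (dR R (Cm1 m) (EP (0 : Fin (m+1)) (Fin.last m)) (n+2) m)
    = LinearMap.id := by
  apply Finsupp.lhom_ext
  intro b r
  rw [← Finsupp.smul_single_one, map_smul, map_smul, LinearMap.id_apply]
  congr 1
  rw [LinearMap.add_apply, LinearMap.comp_apply, LinearMap.comp_apply]
  by_cases h1 : b.1 (Fin.succ 0) = (1 : Fin (m+1))
  · -- second entry is the vertex 1 : H kills b, and H(d b) has a single surviving term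
    rw [Hmap_single R hm (n+1) b, dif_pos h1, map_zero, zero_add]
    rw [dR_single_good R hm n b, map_sum, Fin.sum_univ_succ]
    have hne : (GRC hm (good_del (RCb_good hm b) 0)).1 (Fin.succ 0) ≠ 1 := by
      show delMid b.1 0 (Fin.succ 0) ≠ 1
      rw [delMid_zero_second]
      exact good_ssucc_ne_one hm (RCb_good hm b)
    have hzero : ∀ j' : Fin (n+1),
        Hmap R m hm n ((-1:R)^(((j'.succ : Fin (n+2)) : ℕ)+1) •
          Finsupp.single (GRC hm (good_del (RCb_good hm b) j'.succ)) (1:R)) = 0 := by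
      intro j'
      rw [map_smul, Hmap_single R hm n, dif_pos ?_, smul_zero]
      show delMid b.1 j'.succ (Fin.succ 0) = 1
      rw [delMid_succ_second]
      exact h1
    rw [Finset.sum_congr rfl (fun j' _ => hzero j'), Finset.sum_const, smul_zero, add_zero]
    rw [map_smul, Hmap_single R hm n, dif_neg hne]
    have e0 : GRC hm (good_ins hm (RCb_good hm (GRC hm (good_del (RCb_good hm b) 0))) hne)
        = b := Subtype.ext (insv_delMid_zero b.1 h1)
    rw [e0]
    simp
  · -- second entry is not the vertex 1
    rw [Hmap_single R hm (n+1) b, dif_neg h1, map_neg]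
    set insb := GRC hm (good_ins hm (RCb_good hm b) h1) with hinsb
    rw [dR_single_good R hm (n+1) insb, Fin.sum_univ_succ]
    have e0 : GRC hm (good_del (RCb_good hm insb) 0) = b := Subtype.ext (delMid_insv_zero b.1)
    rw [e0]
    have hne : ∀ j : Fin (n+2), (GRC hm (good_del (RCb_good hm b) j)).1 (Fin.succ 0) ≠ 1 :=
      fun j => del_second_ne_one hm (RCb_good hm b) h1 j
    have key : ∀ j : Fin (n+2),
        GRC hm (good_del (RCb_good hm insb) j.succ)
          = GRC hm (good_ins hm (RCb_good hm (GRC hm (good_del (RCb_good hm b) j))) (hne j)) :=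
      fun j => Subtype.ext (delMid_insv_succ b.1 j)
    rw [dR_single_good R hm n b, map_sum]
    have hterm : ∀ j : Fin (n+2),
        Hmap R m hm n ((-1:R)^((j : ℕ)+1) •
            Finsupp.single (GRC hm (good_del (RCb_good hm b) j)) (1:R))
          = -((-1:R)^((j : ℕ)+1) •
              Finsupp.single (GRC hm (good_ins hm
                (RCb_good hm (GRC hm (good_del (RCb_good hm b) j))) (hne j))) (1:R)) := by
      intro j
      rw [map_smul, Hmap_single R hm n, dif_neg (hne j), smul_neg]
    rw [Finset.sum_congr rfl (fun j _ => hterm j)]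
    have hterm2 : ∀ j : Fin (n+2),
        (-1:R)^(((j.succ : Fin (n+3)) : ℕ)+1) •
            Finsupp.single (GRC hm (good_del (RCb_good hm insb) j.succ)) (1:R)
          = -((-1:R)^((j : ℕ)+1) •
              Finsupp.single (GRC hm (good_ins hm
                (RCb_good hm (GRC hm (good_del (RCb_good hm b) j))) (hne j))) (1:R)) := by
      intro j
      rw [key j, Fin.val_succ, pow_succ, mul_smul, neg_one_smul, smul_neg]
    rw [Finset.sum_congr rfl (fun j _ => hterm2 j)]
    rw [Fin.val_zero, zero_add, pow_one, neg_one_smul, neg_add, neg_neg, add_assoc,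
      neg_add_cancel, add_zero]

end Homotopy
section Deg2
variable {m : ℕ}

lemma good_star (hm : 2 ≤ m) : Good m 2 (![0, 1, Fin.last m] : Fin 3 → Fin (m+1)) := by
  have hv1 : ((1 : Fin (m+1)) : ℕ) = 1 := by
    have h := Fin.val_one' (m+1)
    rw [h]
    exact Nat.mod_eq_of_lt (by omega)
  refine ⟨rfl, rfl, ?_⟩
  rw [Fin.strictMono_iff_lt_succ]
  intro i
  refine Fin.cases ?_ (fun i' => ?_) i
  · show (0 : Fin (m+1)) < 1
    rw [Fin.lt_def, Fin.val_zero, hv1]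
    omega
  · have : i' = 0 := Subsingleton.elim _ _
    subst this
    show (1 : Fin (m+1)) < Fin.last m
    rw [Fin.lt_def, hv1, Fin.val_last]
    omega

/-- The generating tuple `(a₀, a₁, a_m)`. -/
def bstar (hm : 2 ≤ m) : RCb (Cm1 m) (EP (0 : Fin (m+1)) (Fin.last m)) 2 m :=
  GRC hm (good_star hm)

lemma eq_bstar (hm : 2 ≤ m)
    {b : RCb (Cm1 m) (EP (0 : Fin (m+1)) (Fin.last m)) 2 m}
    (h1 : b.1 (Fin.succ 0) = 1) : b = bstar hm := by
  have hg := RCb_good hm (k := 0) b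
  refine Subtype.ext (funext fun i => ?_)
  refine Fin.cases ?_ (fun i' => ?_) i
  · rw [hg.1]; rfl
  · refine Fin.cases ?_ (fun i'' => ?_) i'
    · rw [h1]; rfl
    · have : i'' = 0 := Subsingleton.elim _ _
      subst this
      have e : Fin.succ (Fin.succ (0 : Fin 1)) = Fin.last 2 := by decide
      rw [e, hg.2.1]
      rfl

lemma deg2_single (R : Type) [CommRing R] (hm : 2 ≤ m)
    (b : RCb (Cm1 m) (EP (0 : Fin (m+1)) (Fin.last m)) 2 m) :
    dR R (Cm1 m) (EP (0 : Fin (m+1)) (Fin.last m)) 2 m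
        (Hmap R m hm 0 (Finsupp.single b 1))
      = Finsupp.single b 1 - Finsupp.single (bstar hm) 1 := by
  rw [Hmap_single R hm 0 b]
  by_cases h1 : b.1 (Fin.succ 0) = (1 : Fin (m+1))
  · rw [dif_pos h1, map_zero, eq_bstar hm h1, sub_self]
  · rw [dif_neg h1, map_neg]
    set insb := GRC hm (good_ins hm (RCb_good hm b) h1) with hinsb
    rw [dR_single_good R hm 0 insb, Fin.sum_univ_succ, Fin.sum_univ_one]
    have e0 : GRC hm (good_del (RCb_good hm insb) 0) = b := Subtype.ext (delMid_insv_zero b.1)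
    have e1 : GRC hm (good_del (RCb_good hm insb) (Fin.succ 0)) = bstar hm := by
      refine Subtype.ext ?_
      show delMid (insv 1 b.1) (Fin.succ 0) = ![0, 1, Fin.last m]
      rw [delMid_insv_succ b.1 (0 : Fin 1)]
      funext i
      refine Fin.cases ?_ (fun i' => ?_) i
      · rw [insv_zero, delMid_zero']
        rw [(RCb_good hm (k := 0) b).1]
        rfl
      · refine Fin.cases ?_ (fun i'' => ?_) i'
        · rw [insv_succ_zero]
          rfl
        · have : i'' = 0 := Subsingleton.elim _ _
          subst this
          rw [insv_succ_succ, delMid_zero_second]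
          have hg := RCb_good hm (k := 0) b
          have e : (Fin.succ (0 : Fin 1)).succ = Fin.last 2 := rfl
          rw [e, hg.2.1]
          rfl
    rw [e0, e1]
    have ev : ((Fin.succ (0 : Fin 1) : Fin 2) : ℕ) = 1 := rfl
    rw [ev]
    simp only [Fin.val_zero, zero_add, pow_one]
    norm_num
    abel

lemma deg2_id (R : Type) [CommRing R] (hm : 2 ≤ m)
    (x : RMod R (Cm1 m) (EP (0 : Fin (m+1)) (Fin.last m)) 2 m) :
    dR R (Cm1 m) (EP (0 : Fin (m+1)) (Fin.last m)) 2 m (Hmap R m hm 0 x)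
      = x - (eps R (Cm1 m) (EP (0 : Fin (m+1)) (Fin.last m)) 2 m x) •
          Finsupp.single (bstar hm) 1 := by
  induction x using Finsupp.induction_linear with
  | zero => simp
  | add f g hf hg =>
    rw [map_add, map_add, hf, hg, map_add, add_smul]
    abel
  | single a r =>
    rw [← Finsupp.smul_single_one, map_smul, map_smul, deg2_single R hm a, map_smul,
      eps_single, smul_eq_mul, mul_one, smul_sub]

lemma eps_dR (R : Type) [CommRing R] (hm : 2 ≤ m)
    (w : RMod R (Cm1 m) (EP (0 : Fin (m+1)) (Fin.last m)) 3 m) :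
    eps R (Cm1 m) (EP (0 : Fin (m+1)) (Fin.last m)) 2 m
      (dR R (Cm1 m) (EP (0 : Fin (m+1)) (Fin.last m)) 2 m w) = 0 := by
  induction w using Finsupp.induction_linear with
  | zero => simp
  | add f g hf hg => rw [map_add, map_add, hf, hg, add_zero]
  | single a r =>
    rw [← Finsupp.smul_single_one, map_smul, map_smul]
    have : dR R (Cm1 m) (EP (0 : Fin (m+1)) (Fin.last m)) 2 m (Finsupp.single a 1)
        = dR R (Cm1 m) (EP (0 : Fin (m+1)) (Fin.last m)) 2 m (Finsupp.single a 1) := rfl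
    rw [dR_single_good R hm 0 a, map_sum, Fin.sum_univ_succ, Fin.sum_univ_one]
    rw [map_smul, map_smul, eps_single, eps_single]
    simp

lemma rmod_subsingleton (R : Type) [CommRing R] {V : Type} (G : DGraph V)
    (P : ∀ k, (Fin (k + 1) → V) → Prop) (k ℓ : ℕ) (h : IsEmpty (RCb G P k ℓ)) :
    Subsingleton (RMod R G P k ℓ) :=
  ⟨fun f g => Finsupp.ext fun a => h.elim a⟩

end Deg2
/-- for `C_{m,1}` (`m ≥ 2`) and `ℓ ≥ 2`, the magnitude homology
`MH_{k,ℓ}(a₀,a_m)` vanishes except for `MH_{2,m}(a₀,a_m)`, which is free of rank `1`,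
generated by the class of `(a₀, a₁, a_m)`. -/
theorem Cm1_endpoint_homology (R : Type) [CommRing R] (m : ℕ) (hm : 2 ≤ m) :
    -- vanishing away from `(k,ℓ) = (2,m)`:
    (∀ k ℓ : ℕ, 2 ≤ ℓ → ¬(k = 2 ∧ ℓ = m) →
      ∀ c : RH R (Cm1 m) (EP (0 : Fin (m + 1)) (Fin.last m)) k ℓ, c = 0) ∧
    -- `MH_{2,m}(a₀,a_m)` is freely generated by the class of `(a₀, a₁, a_m)`:
    (∃ (b : RCb (Cm1 m) (EP (0 : Fin (m + 1)) (Fin.last m)) 2 m)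
       (z : LinearMap.ker (dROut R (Cm1 m) (EP (0 : Fin (m + 1)) (Fin.last m)) m 2)),
      b.1 = ![0, 1, Fin.last m] ∧
      (z : RMod R (Cm1 m) (EP (0 : Fin (m + 1)) (Fin.last m)) 2 m) = Finsupp.single b 1 ∧
      (∀ y : RH R (Cm1 m) (EP (0 : Fin (m + 1)) (Fin.last m)) 2 m,
        ∃ r : R, y = r • (Submodule.Quotient.mk z :
          RH R (Cm1 m) (EP (0 : Fin (m + 1)) (Fin.last m)) 2 m)) ∧
      (∀ r : R, r • (Submodule.Quotient.mk z :
          RH R (Cm1 m) (EP (0 : Fin (m + 1)) (Fin.last m)) 2 m) = 0 → r = 0)) := by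
  constructor
  · -- vanishing
    intro k ℓ hl hne c
    -- a helper to kill the homology when the chain group is trivial
    have kill : ∀ (k' ℓ' : ℕ), IsEmpty (RCb (Cm1 m) (EP (0 : Fin (m+1)) (Fin.last m)) k' ℓ') →
        ∀ c' : RH R (Cm1 m) (EP (0 : Fin (m + 1)) (Fin.last m)) k' ℓ', c' = 0 := by
      intro k' ℓ' he c'
      have hsub := rmod_subsingleton R (Cm1 m) (EP (0 : Fin (m+1)) (Fin.last m)) k' ℓ' he
      obtain ⟨x, rfl⟩ := Submodule.Quotient.mk_surjective _ c'
      have hx : x = 0 := Subtype.ext (hsub.elim _ _)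
      rw [hx, Submodule.Quotient.mk_eq_zero]
      exact Submodule.zero_mem _
    rcases Nat.lt_or_ge k 2 with hk | hk
    · interval_cases k
      · exact kill 0 ℓ (rcb_empty_k0 hm ℓ) c
      · exact kill 1 ℓ (rcb_empty_k1 hm hl) c
    · by_cases hlm : ℓ = m
      · subst hlm
        have hk3 : 3 ≤ k := by
          rcases Nat.lt_or_ge k 3 with h | h
          · interval_cases k
            · exact absurd ⟨rfl, rfl⟩ hne
          · exact h
        obtain ⟨n, rfl⟩ : ∃ n, k = n + 3 := ⟨k - 3, by omega⟩
        obtain ⟨x, rfl⟩ := Submodule.Quotient.mk_surjective _ c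
        rw [Submodule.Quotient.mk_eq_zero, Submodule.mem_comap]
        have hx : dR R (Cm1 ℓ) (EP (0 : Fin (ℓ+1)) (Fin.last ℓ)) (n+2) ℓ x.1 = 0 :=
          LinearMap.mem_ker.mp x.2
        refine ⟨Hmap R ℓ hm (n+1) x.1, ?_⟩
        show dR R (Cm1 ℓ) (EP (0 : Fin (ℓ+1)) (Fin.last ℓ)) (n+3) ℓ
          (Hmap R ℓ hm (n+1) x.1) = x.1
        have h := LinearMap.congr_fun (homotopy_id R hm n) x.1
        rw [LinearMap.add_apply, LinearMap.comp_apply, LinearMap.comp_apply,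
          LinearMap.id_apply, hx, map_zero, add_zero] at h
        exact h
      · exact kill k ℓ (rcb_empty_lne hm hk hlm) c
  · -- the rank-one part
    have hsub1 : Subsingleton (RMod R (Cm1 m) (EP (0 : Fin (m+1)) (Fin.last m)) 1 m) :=
      rmod_subsingleton R _ _ 1 m (rcb_empty_k1 hm hm)
    have hkerz : Finsupp.single (bstar hm) (1:R) ∈
        LinearMap.ker (dROut R (Cm1 m) (EP (0 : Fin (m + 1)) (Fin.last m)) m 2) := by
      rw [LinearMap.mem_ker]
      exact hsub1.elim _ _
    refine ⟨bstar hm, ⟨Finsupp.single (bstar hm) 1, hkerz⟩, rfl, rfl, ?_, ?_⟩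
    · -- spanning
      intro y
      obtain ⟨x, rfl⟩ := Submodule.Quotient.mk_surjective _ y
      refine ⟨eps R (Cm1 m) (EP (0 : Fin (m+1)) (Fin.last m)) 2 m x.1, ?_⟩
      rw [← Submodule.Quotient.mk_smul, ← sub_eq_zero, ← Submodule.Quotient.mk_sub,
        Submodule.Quotient.mk_eq_zero, Submodule.mem_comap]
      refine ⟨Hmap R m hm 0 x.1, ?_⟩
      show dR R (Cm1 m) (EP (0 : Fin (m+1)) (Fin.last m)) 2 m (Hmap R m hm 0 x.1) = _
      rw [deg2_id R hm x.1]
      rfl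
    · -- independence
      intro r hr
      rw [← Submodule.Quotient.mk_smul, Submodule.Quotient.mk_eq_zero,
        Submodule.mem_comap] at hr
      obtain ⟨w, hw⟩ := hr
      have hw' : dR R (Cm1 m) (EP (0 : Fin (m+1)) (Fin.last m)) 2 m w
          = r • Finsupp.single (bstar hm) 1 := hw
      have := congrArg (eps R (Cm1 m) (EP (0 : Fin (m+1)) (Fin.last m)) 2 m) hw'
      rw [eps_dR R hm w, map_smul, eps_single, smul_eq_mul, mul_one] at this
      exact this.symm
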